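/- Let w be a weight vector with nonzero entries and l a continuous nonnegative loss. Fix a hidden layer s with nodes O_{1,s},...,O_{h,s}, and let w_{i,s} be the incoming weight vector of node O_{i,s}. Setting c_{i,s} = ε/(√h · ‖w_{i,s}‖) for each i and applying the positively scaling transformation φ_c with these factors (and 1 elsewhere) yields w' = φ_c(w) such that the point obtained from w' by zeroing all incoming weights of layer s lies in the Euclidean ball B(w', ε). Consequently max_{w'' ∈ B(w',ε)} l(w'') ≥ l(w_zero), where w_zero is w' with layer-s incoming weights zeroed (a network computing a constant function). -/

import Mathlib

/-- After positively rescaling the incoming weight blocks of layer s by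
c_i = ε/(√h‖w_i‖), the point with those blocks zeroed lies in the ε-ball
around the rescaled weights; hence the max of the loss on that ball is at
least the loss at the zeroed (constant-function) point. -/
theorem eps_flatness_not_psi_construction (h k : ℕ) (hh : 0 < h)
    (ε : ℝ) (hε : 0 < ε)
    (w : Fin h → EuclideanSpace ℝ (Fin k)) (hw : ∀ i, w i ≠ 0)
    (c : Fin h → ℝ) (hc : ∀ i, c i = ε / (Real.sqrt h * ‖w i‖))
    (w' : EuclideanSpace ℝ (Fin h × Fin k))
    (hw' : ∀ i j, w' (i, j) = c i * w i j)
    (l : EuclideanSpace ℝ (Fin h × Fin k) → ℝ)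
    (hl : Continuous l) (hl0 : ∀ x, 0 ≤ l x) :
    (0 : EuclideanSpace ℝ (Fin h × Fin k)) ∈ Metric.closedBall w' ε ∧
    l 0 ≤ ⨆ x : Metric.closedBall w' ε, l ↑x := by
  have hmem : (0 : EuclideanSpace ℝ (Fin h × Fin k)) ∈ Metric.closedBall w' ε := by
    rw [Metric.mem_closedBall, dist_zero_left, EuclideanSpace.norm_eq]
    have hsum : ∑ p : Fin h × Fin k, ‖w' p‖ ^ 2 = ε ^ 2 := by
      rw [Fintype.sum_prod_type]
      have hterm : ∀ i : Fin h, ∑ j, ‖w' (i, j)‖ ^ 2 = ε ^ 2 / h := by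
        intro i
        have hwn : ‖w i‖ ≠ 0 := norm_ne_zero_iff.mpr (hw i)
        have hs : Real.sqrt h ≠ 0 := by
          positivity
        have : ∑ j, ‖w' (i, j)‖ ^ 2 = (c i) ^ 2 * ∑ j, (w i j) ^ 2 := by
          rw [Finset.mul_sum]
          refine Finset.sum_congr rfl fun j _ => ?_
          rw [hw' i j, Real.norm_eq_abs, sq_abs, mul_pow]
        rw [this]
        have hn2 : ∑ j, (w i j) ^ 2 = ‖w i‖ ^ 2 := by
          rw [EuclideanSpace.norm_eq, Real.sq_sqrt (by positivity)]
          refine Finset.sum_congr rfl fun j _ => ?_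
          rw [Real.norm_eq_abs, sq_abs]
        rw [hn2, hc i, div_pow, mul_pow, Real.sq_sqrt (Nat.cast_nonneg h)]
        field_simp
      rw [Finset.sum_congr rfl fun i _ => hterm i, Finset.sum_const, Finset.card_univ,
        Fintype.card_fin, nsmul_eq_mul]
      have : (h : ℝ) ≠ 0 := Nat.cast_ne_zero.mpr hh.ne'
      field_simp
    rw [hsum, Real.sqrt_sq hε.le]
  refine ⟨hmem, ?_⟩
  have hcpt : IsCompact (Metric.closedBall w' ε) := isCompact_closedBall w' ε
  have hbdd : BddAbove (Set.range fun x : Metric.closedBall w' ε => l ↑x) := by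
    have := (hcpt.image hl).bddAbove
    rwa [Set.image_eq_range] at this
  exact le_ciSup hbdd ⟨0, hmem⟩
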